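/- For every r ≥ 1 and every matroid M of finite rank m ≥ 1 (with at least one basis consisting of non-loops), there exists a sequence S of non-loop elements of M with |S| = m(r-1) such that for every partition of S into r pairwise disjoint subsequences S_1, …, S_r one has ⋂_{i=1}^r cl(S_i) = cl(∅). -/

import Mathlib

/-- Tightness: there is a sequence of `m (r-1)` non-loops such that every partition into
`r` disjoint subsequences has `⋂ cl(Sᵢ) = cl(∅)`. -/
theorem matroidal_tverberg_tight {α : Type*} (M : Matroid α) (m r : ℕ)
    (hr : 1 ≤ r) (hm : 1 ≤ m)
    (B : Set α) (hB : M.IsBase B) (hBfin : B.Finite) (hBm : B.ncard = m)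
    (hBnl : ∀ x ∈ B, x ∉ M.closure ∅) :
    ∃ S : Fin (m * (r - 1)) → α,
      (∀ i, S i ∈ M.E ∧ S i ∉ M.closure ∅) ∧
      ∀ J : Fin r → Finset (Fin (m * (r - 1))),
        (∀ i j, i ≠ j → Disjoint (J i) (J j)) →
        (∀ i : Fin (m * (r - 1)), ∃ k, i ∈ J k) →
        (⋂ k : Fin r, M.closure (S '' (J k : Set (Fin (m * (r - 1)))))) =
          M.closure ∅ := by
  classical
  haveI : Fintype B := hBfin.fintype
  have hcard : Fintype.card B = m := by
    rw [← hBm, Set.ncard_eq_toFinset_card']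
    simp [Set.toFinset_card]
  -- enumerate B
  obtain e := Fintype.equivFinOfCardEq hcard
  set b : Fin m → α := fun t => (e.symm t : α) with hb
  have hbB : ∀ t, b t ∈ B := fun t => (e.symm t).2
  have hbinj : Function.Injective b := fun s t h =>
    e.symm.injective (Subtype.ext h)
  have hdivlt : ∀ i : Fin (m * (r - 1)), i.1 / (r - 1) < m := by
    intro i
    exact Nat.div_lt_of_lt_mul (Nat.lt_of_lt_of_eq i.2 (Nat.mul_comm m (r - 1)))
  refine ⟨fun i => b ⟨i.1 / (r - 1), hdivlt i⟩, ?_, ?_⟩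
  · intro i
    refine ⟨hB.subset_ground (hbB _), hBnl _ (hbB _)⟩
  intro J hdisj hcover
  have hIndep : M.Indep B := hB.indep
  -- each S '' J k is a subset of B
  set S : Fin (m * (r - 1)) → α := fun i => b ⟨i.1 / (r - 1), hdivlt i⟩ with hS
  have hsub : ∀ k : Fin r, (S '' (J k : Set (Fin (m * (r - 1))))) ⊆ B := by
    rintro k x ⟨i, _, rfl⟩
    exact hbB _
  haveI : Nonempty (Fin r) := ⟨⟨0, hr⟩⟩
  rw [← hIndep.closure_iInter_eq_biInter_closure_of_forall_subset hsub]
  have hempty : (⋂ k : Fin r, S '' (J k : Set (Fin (m * (r - 1))))) = (∅ : Set α) := by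
    rw [Set.eq_empty_iff_forall_notMem]
    intro x hx
    rw [Set.mem_iInter] at hx
    -- for each k, choose an index in J k mapping to x
    choose i hiJ hiS using fun k => hx k
    -- all these indices have the same quotient t
    obtain ⟨t, ht⟩ : ∃ t : Fin m, ∀ k, (⟨(i k).1 / (r - 1), hdivlt _⟩ : Fin m) = t := by
      refine ⟨⟨(i ⟨0, hr⟩).1 / (r - 1), hdivlt _⟩, fun k => ?_⟩
      apply hbinj
      rw [show b ⟨(i k).1 / (r-1), hdivlt _⟩ = S (i k) from rfl, hiS k, ← hiS ⟨0, hr⟩]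
    -- r - 1 > 0 since some index exists
    have hpos : 0 < m * (r - 1) := (i ⟨0, hr⟩).pos
    have hr1 : 0 < r - 1 := Nat.pos_of_ne_zero (fun h0 => by simp [h0] at hpos)
    -- build an injection Fin r → Fin (r-1) via remainders
    have hinj : Function.Injective (fun k : Fin r =>
        (⟨(i k).1 % (r - 1), Nat.mod_lt _ hr1⟩ : Fin (r - 1))) := by
      intro k k' h
      have hmod : (i k).1 % (r - 1) = (i k').1 % (r - 1) := congrArg Fin.val h
      have hdiv : (i k).1 / (r - 1) = (i k').1 / (r - 1) := by
        have := (ht k).trans (ht k').symm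
        exact congrArg Fin.val this
      have hik : i k = i k' := by
        apply Fin.ext
        rw [← Nat.div_add_mod (i k).1 (r - 1), ← Nat.div_add_mod (i k').1 (r - 1), hmod, hdiv]
      by_contra hkk'
      exact Finset.disjoint_left.mp (hdisj k k' hkk') (Finset.mem_coe.mp (hiJ k))
        (Finset.mem_coe.mp (hik ▸ hiJ k'))
    have := Fintype.card_le_of_injective _ hinj
    simp only [Fintype.card_fin] at this
    omega
  rw [hempty]
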